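/- Equilibrium points of the quasistatic Eulerian strut equations are exactly pairs (ν, ν°) ∈ L²(0,1) × ℝ such that ν = φ' for some φ ∈ C²([0,1]) satisfying the pendulum equation φ''(s) + γ sin φ(s) = 0 with φ(0) = 0 and φ'(1) = ν°, together with the threshold condition |φ(1) − φ'(1) − κ'(φ'(1))| ≤ Θ(φ'(1)). In particular, every solution ν of the integral equation ν° − ν(s) + γ∫_s^1 sin(∫_0^σ ν) dσ = 0 is automatically C¹ and satisfies ν(1) = ν°. -/

import Mathlib

open MeasureTheory Set

private lemma ae_imp_of_ae_restrict' {p : ℝ → Prop}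
    (h : ∀ᵐ s ∂(volume.restrict (Icc (0:ℝ) 1)), p s) :
    ∀ᵐ s ∂(volume : Measure ℝ), s ∈ Icc (0:ℝ) 1 → p s :=
  (ae_restrict_iff' measurableSet_Icc).1 h

private lemma uIoc_subset_Icc' {a b : ℝ} (ha : a ∈ Icc (0:ℝ) 1) (hb : b ∈ Icc (0:ℝ) 1) :
    Set.uIoc a b ⊆ Icc (0:ℝ) 1 := by
  intro x hx
  rw [Set.uIoc, Set.mem_Ioc] at hx
  exact ⟨le_of_lt (lt_of_le_of_lt (le_min ha.1 hb.1) hx.1), hx.2.trans (max_le ha.2 hb.2)⟩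

private lemma integral_congr_of_ae' {ν χ : ℝ → ℝ}
    (hae : ∀ᵐ s ∂(volume.restrict (Icc (0:ℝ) 1)), ν s = χ s)
    {a b : ℝ} (ha : a ∈ Icc (0:ℝ) 1) (hb : b ∈ Icc (0:ℝ) 1) :
    ∫ t in a..b, ν t = ∫ t in a..b, χ t := by
  apply intervalIntegral.integral_congr_ae
  filter_upwards [ae_imp_of_ae_restrict' hae] with x h hx
  exact h (uIoc_subset_Icc' ha hb hx)

/-- characterization of equilibrium points of the quasistatic Eulerian
strut equations: `(ν, νc)` is an equilibrium (integral equation a.e. plus threshold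
condition `|D̂| ≤ Θ(νc)`) iff `ν = φ'` a.e. for a `C²` solution `φ` of the pendulum
equation `φ'' + γ sin φ = 0` with `φ(0) = 0`, `φ'(1) = νc`, satisfying
`|φ(1) − φ'(1) − κ'(φ'(1))| ≤ Θ(φ'(1))`; in particular `ν` is automatically `C¹`
with `ν(1) = νc`. -/
theorem stmt_13 (Θ κ : ℝ → ℝ) (γ : ℝ)
    (ν : ℝ → ℝ) (νc : ℝ) (hint : IntervalIntegrable ν volume 0 1) :
    ((∀ᵐ s ∂(volume.restrict (Icc (0:ℝ) 1)),
        νc - ν s + γ * ∫ σ in s..1, Real.sin (∫ ζ in (0:ℝ)..σ, ν ζ) = 0) ∧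
      |(∫ s in (0:ℝ)..1, ν s) - νc - deriv κ νc| ≤ Θ νc)
    ↔
    (∃ φ χ : ℝ → ℝ,
      φ 0 = 0 ∧ χ 1 = νc ∧
      ContinuousOn χ (Icc 0 1) ∧
      (∀ s ∈ Icc (0:ℝ) 1, HasDerivWithinAt φ (χ s) (Icc 0 1) s) ∧
      (∀ s ∈ Icc (0:ℝ) 1, HasDerivWithinAt χ (-(γ * Real.sin (φ s))) (Icc 0 1) s) ∧
      (∀ᵐ s ∂(volume.restrict (Icc (0:ℝ) 1)), ν s = χ s) ∧
      |φ 1 - χ 1 - deriv κ (χ 1)| ≤ Θ (χ 1)) := by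
  have h01 : (0:ℝ) ∈ Icc (0:ℝ) 1 := ⟨le_refl _, zero_le_one⟩
  have h11 : (1:ℝ) ∈ Icc (0:ℝ) 1 := ⟨zero_le_one, le_refl _⟩
  constructor
  · rintro ⟨hae, hth⟩
    -- clamped primitive of ν
    set cl : ℝ → ℝ := fun σ => min 1 (max 0 σ) with hcl_def
    have hcl_mem : ∀ σ, cl σ ∈ Icc (0:ℝ) 1 :=
      fun σ => ⟨le_min zero_le_one (le_max_left 0 σ), min_le_left _ _⟩
    have hcl_eq : ∀ σ ∈ Icc (0:ℝ) 1, cl σ = σ := by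
      intro σ hσ
      simp only [hcl_def, max_eq_right hσ.1, min_eq_right hσ.2]
    set Φ : ℝ → ℝ := fun σ => ∫ t in (0:ℝ)..(cl σ), ν t with hΦ_def
    have hνint : IntegrableOn ν (Icc (0:ℝ) 1) volume :=
      (intervalIntegrable_iff_integrableOn_Icc_of_le zero_le_one).1 hint
    have hΦcont : Continuous Φ := by
      have h1 : ContinuousOn (fun x => ∫ t in (0:ℝ)..x, ν t) (Icc (0:ℝ) 1) := by
        have := intervalIntegral.continuousOn_primitive_interval
          (f := ν) (a := (0:ℝ)) (b := 1) (μ := volume)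
          (by rwa [uIcc_of_le zero_le_one])
        rwa [uIcc_of_le zero_le_one] at this
      exact h1.comp_continuous
        (continuous_const.min (continuous_const.max continuous_id)) hcl_mem
    set g : ℝ → ℝ := fun σ => Real.sin (Φ σ) with hg_def
    have hgcont : Continuous g := Real.continuous_sin.comp hΦcont
    set χ : ℝ → ℝ := fun s => νc + γ * ∫ σ in s..1, g σ with hχ_def
    have hχd : ∀ s, HasDerivAt χ (-(γ * g s)) s := by
      intro s
      have h1 : HasDerivAt (fun u => ∫ σ in u..1, g σ) (-(g s)) s :=
        intervalIntegral.integral_hasDerivAt_left (hgcont.intervalIntegrable _ _)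
          hgcont.aestronglyMeasurable.stronglyMeasurableAtFilter hgcont.continuousAt
      have := (h1.const_mul γ).const_add νc
      rw [mul_neg] at this
      exact this
    have hχcont : Continuous χ := by
      have : Differentiable ℝ χ := fun s => (hχd s).differentiableAt
      exact this.continuous
    have hχ1 : χ 1 = νc := by simp [hχ_def]
    set φ : ℝ → ℝ := fun s => ∫ t in (0:ℝ)..s, χ t with hφ_def
    have hφd : ∀ s, HasDerivAt φ (χ s) s := fun s =>
      intervalIntegral.integral_hasDerivAt_right (hχcont.intervalIntegrable _ _)
        hχcont.aestronglyMeasurable.stronglyMeasurableAtFilter hχcont.continuousAt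
    -- ν = χ a.e. on [0,1]
    have hνχ : ∀ᵐ s ∂(volume.restrict (Icc (0:ℝ) 1)), ν s = χ s := by
      filter_upwards [hae, ae_restrict_mem measurableSet_Icc] with s h hs
      have hcongr : (∫ σ in s..1, Real.sin (∫ ζ in (0:ℝ)..σ, ν ζ)) = ∫ σ in s..1, g σ := by
        apply intervalIntegral.integral_congr
        intro σ hσ
        have hσ' : σ ∈ Icc (0:ℝ) 1 := by
          have : uIcc s 1 ⊆ uIcc (0:ℝ) 1 := uIcc_subset_uIcc
            (by rwa [uIcc_of_le zero_le_one]) (by rw [uIcc_of_le zero_le_one]; exact h11)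
          have := this hσ; rwa [uIcc_of_le zero_le_one] at this
        simp only [hg_def, hΦ_def, hcl_eq σ hσ']
      rw [hcongr] at h
      simp only [hχ_def]
      linarith
    -- Φ = φ on [0,1]
    have hΦφ : ∀ s ∈ Icc (0:ℝ) 1, Φ s = φ s := by
      intro s hs
      simp only [hΦ_def, hφ_def, hcl_eq s hs]
      exact integral_congr_of_ae' hνχ h01 hs
    refine ⟨φ, χ, by simp [hφ_def], hχ1, hχcont.continuousOn,
      fun s _ => (hφd s).hasDerivWithinAt, ?_, hνχ, ?_⟩
    · intro s hs
      have := (hχd s).hasDerivWithinAt (s := Icc (0:ℝ) 1)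
      simpa only [hg_def, hΦφ s hs] using this
    · have hint01 : (∫ s in (0:ℝ)..1, ν s) = φ 1 := by
        rw [hφ_def]; exact integral_congr_of_ae' hνχ h01 h11
      rw [hχ1, ← hint01]
      exact hth
  · rintro ⟨φ, χ, hφ0, hχ1, hχc, hφd, hχd, hνχ, hth⟩
    have hφc : ContinuousOn φ (Icc (0:ℝ) 1) := fun s hs => (hφd s hs).continuousWithinAt
    -- FTC-2 on subintervals of [0,1]
    have key : ∀ (f f' : ℝ → ℝ), (∀ s ∈ Icc (0:ℝ) 1, HasDerivWithinAt f (f' s) (Icc 0 1) s) →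
        ContinuousOn f' (Icc (0:ℝ) 1) → ∀ a b : ℝ, a ∈ Icc (0:ℝ) 1 → b ∈ Icc (0:ℝ) 1 →
        a ≤ b → ∫ y in a..b, f' y = f b - f a := by
      intro f f' hd hc a b ha hb hab
      have hsub : Icc a b ⊆ Icc (0:ℝ) 1 := Icc_subset_Icc ha.1 hb.2
      apply intervalIntegral.integral_eq_sub_of_hasDeriv_right_of_le hab
      · exact ContinuousOn.mono (s := Icc (0:ℝ) 1)
          (fun s hs => (hd s hs).continuousWithinAt) hsub
      · intro x hx
        have hx01 : x ∈ Ioo (0:ℝ) 1 := ⟨lt_of_le_of_lt ha.1 hx.1, lt_of_lt_of_le hx.2 hb.2⟩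
        exact ((hd x (Ioo_subset_Icc_self hx01)).hasDerivAt
          (Icc_mem_nhds hx01.1 hx01.2)).hasDerivWithinAt
      · exact (hc.mono (by rw [uIcc_of_le hab]; exact hsub)).intervalIntegrable
    have hφint : ∀ σ ∈ Icc (0:ℝ) 1, (∫ t in (0:ℝ)..σ, χ t) = φ σ := by
      intro σ hσ
      rw [key φ χ hφd hχc 0 σ h01 hσ hσ.1, hφ0, sub_zero]
    have hsincont : ContinuousOn (fun s => -(γ * Real.sin (φ s))) (Icc (0:ℝ) 1) :=
      (continuousOn_const.mul (Real.continuous_sin.comp_continuousOn hφc)).neg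
    have hχint : ∀ s ∈ Icc (0:ℝ) 1, (∫ y in s..1, -(γ * Real.sin (φ y))) = χ 1 - χ s :=
      fun s hs => key χ _ hχd hsincont s 1 hs h11 hs.2
    constructor
    · filter_upwards [hνχ, ae_restrict_mem measurableSet_Icc] with s hs hsm
      have hcongr : (∫ σ in s..1, Real.sin (∫ ζ in (0:ℝ)..σ, ν ζ))
          = ∫ σ in s..1, Real.sin (φ σ) := by
        apply intervalIntegral.integral_congr
        intro σ hσ
        have hσ' : σ ∈ Icc (0:ℝ) 1 := by
          have : uIcc s 1 ⊆ uIcc (0:ℝ) 1 := uIcc_subset_uIcc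
            (by rwa [uIcc_of_le zero_le_one]) (by rw [uIcc_of_le zero_le_one]; exact h11)
          have := this hσ; rwa [uIcc_of_le zero_le_one] at this
        have h1 : (∫ ζ in (0:ℝ)..σ, ν ζ) = ∫ ζ in (0:ℝ)..σ, χ ζ :=
          integral_congr_of_ae' hνχ h01 hσ'
        simp only [h1, hφint σ hσ']
      have h2 := hχint s hsm
      have h3 : (∫ y in s..1, -(γ * Real.sin (φ y)))
          = -(γ * ∫ y in s..1, Real.sin (φ y)) := by
        rw [intervalIntegral.integral_neg, intervalIntegral.integral_const_mul]
      rw [h3] at h2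
      rw [hcongr, hs]
      rw [hχ1] at h2
      linarith
    · have h1 : (∫ s in (0:ℝ)..1, ν s) = φ 1 := by
        rw [← hφint 1 h11]; exact integral_congr_of_ae' hνχ h01 h11
      rw [h1, ← hχ1]
      exact hth
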